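/- The function g(α) = 1 + 2^{2α−1} − 3^α is nonnegative for α ≥ 2 and nonpositive for 1 ≤ α ≤ 2, with g(1) = g(2) = 0. -/

import Mathlib

open Real Set

lemma log3_lt : Real.log 3 < 11/10 := by
  have h10 : Real.log (3^(10:ℕ)) = 10 * Real.log 3 := by
    rw [Real.log_pow]; norm_num
  have hlt : (3:ℝ)^(10:ℕ) < Real.exp 11 := by
    have h : Real.exp 11 = (Real.exp 1)^(11:ℕ) := by
      rw [← Real.exp_nat_mul]; norm_num
    have h1 : (2.7182818283:ℝ)^(11:ℕ) < (Real.exp 1)^(11:ℕ) :=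
      pow_lt_pow_left₀ Real.exp_one_gt_d9 (by norm_num) (by norm_num)
    have h2 : (3:ℝ)^(10:ℕ) < (2.7182818283:ℝ)^(11:ℕ) := by norm_num
    rw [h]; linarith
  have := Real.log_lt_log (by positivity) hlt
  rw [Real.log_exp, h10] at this
  linarith

lemma key_ineq : 3 * Real.log 3 ^ 2 ≤ 8 * Real.log 2 ^ 2 := by
  have h2 := Real.log_two_gt_d9
  have h3 := log3_lt
  have h3p : 0 < Real.log 3 := Real.log_pos (by norm_num)
  nlinarith

lemma hasDerivAt_base (b c d : ℝ) (hb : 0 < b) (α : ℝ) :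
    HasDerivAt (fun x : ℝ => b ^ (c * x + d)) (b ^ (c * α + d) * Real.log b * c) α := by
  have h1 : HasDerivAt (fun x : ℝ => c * x + d) c α := by
    simpa using ((hasDerivAt_id α).const_mul c).add_const d
  exact (Real.hasStrictDerivAt_const_rpow hb (c * α + d)).hasDerivAt.comp α h1

noncomputable def gfun (α : ℝ) : ℝ := 1 + (2:ℝ) ^ (2 * α - 1) - (3:ℝ) ^ α

lemma hasDerivAt_g (α : ℝ) :
    HasDerivAt gfun ((2:ℝ) ^ (2*α-1) * Real.log 2 * 2 - (3:ℝ) ^ α * Real.log 3) α := by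
  have h2 : HasDerivAt (fun x : ℝ => (2:ℝ) ^ (2 * x - 1))
      ((2:ℝ) ^ (2*α-1) * Real.log 2 * 2) α := by
    have := hasDerivAt_base 2 2 (-1) (by norm_num) α
    simpa [sub_eq_add_neg] using this
  have h3 : HasDerivAt (fun x : ℝ => (3:ℝ) ^ x) ((3:ℝ) ^ α * Real.log 3) α := by
    have := hasDerivAt_base 3 1 0 (by norm_num) α
    simpa using this
  exact ((h2.const_add 1).sub h3)

lemma hasDerivAt_g' (α : ℝ) :
    HasDerivAt (fun x : ℝ => (2:ℝ) ^ (2*x-1) * Real.log 2 * 2 - (3:ℝ) ^ x * Real.log 3)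
      ((2:ℝ) ^ (2*α-1) * (2 * Real.log 2)^2 - (3:ℝ) ^ α * Real.log 3 ^ 2) α := by
  have h2 : HasDerivAt (fun x : ℝ => (2:ℝ) ^ (2 * x - 1))
      ((2:ℝ) ^ (2*α-1) * Real.log 2 * 2) α := by
    have := hasDerivAt_base 2 2 (-1) (by norm_num) α
    simpa [sub_eq_add_neg] using this
  have h3 : HasDerivAt (fun x : ℝ => (3:ℝ) ^ x) ((3:ℝ) ^ α * Real.log 3) α := by
    have := hasDerivAt_base 3 1 0 (by norm_num) α
    simpa using this
  have := ((h2.mul_const (Real.log 2)).mul_const 2).sub (h3.mul_const (Real.log 3))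
  convert this using 1
  · rfl
  · rfl
  · rfl
  · ring

lemma g_one : gfun 1 = 0 := by
  have : (2:ℝ) ^ (2 * (1:ℝ) - 1) = 2 := by
    rw [show 2 * (1:ℝ) - 1 = 1 by norm_num, Real.rpow_one]
  rw [gfun, this, Real.rpow_one]; norm_num

lemma g_two : gfun 2 = 0 := by
  have h1 : (2:ℝ) ^ (2 * (2:ℝ) - 1) = 8 := by
    rw [show 2 * (2:ℝ) - 1 = ((3:ℕ):ℝ) by norm_num, Real.rpow_natCast]; norm_num
  have h2 : (3:ℝ) ^ (2:ℝ) = 9 := by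
    rw [show (2:ℝ) = ((2:ℕ):ℝ) by norm_num, Real.rpow_natCast]; norm_num
  rw [gfun, h1, h2]; norm_num

lemma two_rpow_eq (α : ℝ) : (2:ℝ) ^ (2 * α - 1) = (4:ℝ) ^ α / 2 := by
  rw [show 2 * α - 1 = 2 * α + (-1) by ring, Real.rpow_add (by norm_num : (0:ℝ) < 2),
    Real.rpow_neg_one, Real.rpow_mul (by norm_num : (0:ℝ) ≤ 2)]
  norm_num
  ring

lemma four_ge (α : ℝ) (hα : 1 ≤ α) : (4:ℝ)/3 * (3:ℝ)^α ≤ (4:ℝ)^α := by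
  have h1 : ((4:ℝ)/3) ^ (1:ℝ) ≤ ((4:ℝ)/3) ^ α :=
    Real.rpow_le_rpow_of_exponent_le (by norm_num) hα
  rw [Real.rpow_one, Real.div_rpow (by norm_num) (by norm_num)] at h1
  have h3 : (0:ℝ) < (3:ℝ)^α := Real.rpow_pos_of_pos (by norm_num) α
  rw [div_le_div_iff₀ (by norm_num) h3] at h1
  linarith

lemma g_convex : ConvexOn ℝ (Set.Ici (1:ℝ)) gfun := by
  have hcont : Continuous gfun :=
    continuous_iff_continuousAt.2 fun x => (hasDerivAt_g x).continuousAt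
  refine convexOn_of_hasDerivWithinAt2_nonneg (convex_Ici 1) hcont.continuousOn
    (f' := fun x => (2:ℝ) ^ (2*x-1) * Real.log 2 * 2 - (3:ℝ) ^ x * Real.log 3)
    (f'' := fun x => (2:ℝ) ^ (2*x-1) * (2 * Real.log 2)^2 - (3:ℝ) ^ x * Real.log 3 ^ 2)
    (fun x _ => (hasDerivAt_g x).hasDerivWithinAt)
    (fun x _ => (hasDerivAt_g' x).hasDerivWithinAt) ?_
  intro x hx
  rw [interior_Ici] at hx
  have hα : (1:ℝ) ≤ x := le_of_lt hx
  show (0:ℝ) ≤ (2:ℝ) ^ (2*x-1) * (2 * Real.log 2)^2 - (3:ℝ) ^ x * Real.log 3 ^ 2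
  rw [two_rpow_eq]
  have h4 := four_ge x hα
  have h3 : (0:ℝ) < (3:ℝ)^x := Real.rpow_pos_of_pos (by norm_num) x
  have hk := key_ineq
  nlinarith [sq_nonneg (Real.log 2), sq_nonneg (Real.log 3)]

theorem g_sign :
    (∀ α : ℝ, 2 ≤ α → 0 ≤ 1 + (2 : ℝ) ^ (2 * α - 1) - (3 : ℝ) ^ α) ∧
    (∀ α : ℝ, 1 ≤ α → α ≤ 2 → 1 + (2 : ℝ) ^ (2 * α - 1) - (3 : ℝ) ^ α ≤ 0) ∧
    1 + (2 : ℝ) ^ (2 * (1 : ℝ) - 1) - (3 : ℝ) ^ (1 : ℝ) = 0 ∧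
    1 + (2 : ℝ) ^ (2 * (2 : ℝ) - 1) - (3 : ℝ) ^ (2 : ℝ) = 0 := by
  have hc := g_convex
  have h1 := g_one
  have h2 := g_two
  refine ⟨?_, ?_, h1, h2⟩
  · intro α hα
    rcases eq_or_lt_of_le hα with h | h
    · rw [← h]; rw [gfun] at h2; linarith [h2]
    · have hs := hc.slope_mono_adjacent (self_mem_Ici) (le_of_lt (lt_trans one_lt_two h))
        one_lt_two h
      rw [h1, h2] at hs
      simp only [sub_zero, zero_sub] at hs
      have h0 : (0:ℝ) ≤ gfun α / (α - 2) := le_trans (by norm_num) hs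
      have := (div_nonneg_iff.mp h0)
      rcases this with ⟨hg, _⟩ | ⟨hg, hd⟩
      · rw [gfun] at hg; linarith
      · linarith
  · intro α hα1 hα2
    have key := hc.2 (self_mem_Ici) (by norm_num : (2:ℝ) ∈ Set.Ici (1:ℝ))
      (by linarith : (0:ℝ) ≤ 2 - α) (by linarith : (0:ℝ) ≤ α - 1) (by ring)
    simp only [smul_eq_mul, h1, h2, mul_zero, add_zero] at key
    have heq : (2 - α) * 1 + (α - 1) * 2 = α := by ring
    rw [heq] at key
    rw [gfun] at key
    linarith
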